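/- The function S(a,b)(n,m) = 2cpq/(ab(pq + 2c(mp+nq))) satisfies the NQC equation [1+(p−a)S−(p+b)S̃]·[1−(p+a)Ŝ̃+(p−b)Ŝ] = [1+(q−a)S−(q+b)Ŝ]·[1−(q+a)Ŝ̃+(q−b)S̃], at all lattice points where denominators are nonzero. -/

import Mathlib

/-- The N=2 rational solution `S(a,b)(n,m) = 2cpq/(ab(pq + 2c(mp+nq)))` satisfies
the NQC equation in cross-multiplied form. -/
theorem stmt_3 (p q c a b : ℝ) (hp : p ≠ 0) (hq : q ≠ 0) (hc : c ≠ 0)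
    (ha : a ≠ 0) (hb : b ≠ 0)
    (S : ℤ → ℤ → ℝ)
    (hS : ∀ n m : ℤ, S n m = 2*c*p*q / (a*b*(p*q + 2*c*((m : ℝ)*p + (n : ℝ)*q))))
    (n m : ℤ)
    (h1 : p*q + 2*c*((m : ℝ)*p + (n : ℝ)*q) ≠ 0)
    (h2 : p*q + 2*c*((m : ℝ)*p + ((n : ℝ)+1)*q) ≠ 0)
    (h3 : p*q + 2*c*(((m : ℝ)+1)*p + (n : ℝ)*q) ≠ 0)
    (h4 : p*q + 2*c*(((m : ℝ)+1)*p + ((n : ℝ)+1)*q) ≠ 0) :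
    (1 + (p - a) * S n m - (p + b) * S (n+1) m)
        * (1 - (p + a) * S (n+1) (m+1) + (p - b) * S n (m+1))
      = (1 + (q - a) * S n m - (q + b) * S n (m+1))
        * (1 - (q + a) * S (n+1) (m+1) + (q - b) * S (n+1) m) := by
  simp only [hS]
  push_cast
  have h1' : p*q + 2*c*(p*(m:ℝ) + q*(n:ℝ)) ≠ 0 := fun h => h1 (by linarith)
  have h2' : p*q + 2*c*(p*(m:ℝ) + q*((n:ℝ)+1)) ≠ 0 := fun h => h2 (by linarith)
  have h3' : p*q + 2*c*(p*((m:ℝ)+1) + q*(n:ℝ)) ≠ 0 := fun h => h3 (by linarith)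
  have h4' : p*q + 2*c*(p*((m:ℝ)+1) + q*((n:ℝ)+1)) ≠ 0 := fun h => h4 (by linarith)
  field_simp
  ring
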